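/- Let H(p) = -p·log₂(p) - (1-p)·log₂(1-p) be the binary entropy. Then H(p) / [p·(e·ln((1-p)/p) + 1)] → 1/(e·ln 2) as p → 0⁺. In other words, conservative two-stage testing with an optimized Bernoulli first stage achieves rate 1/(e ln 2) ≈ 0.531 in the sparse limit. -/

import Mathlib

open Filter Real Set Topology

private lemma inv_log_tendsto : Tendsto (fun p : ℝ => (Real.log p)⁻¹) (𝓝[>] 0) (𝓝 0) := by
  have h : Tendsto (fun p : ℝ => -Real.log p) (𝓝[>] 0) atTop :=
    tendsto_neg_atBot_atTop.comp Real.tendsto_log_nhdsGT_zero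
  have h2 := h.inv_tendsto_atTop.neg
  simp only [Pi.inv_apply, Pi.neg_apply] at h2 ⊢
  simpa [inv_neg] using h2

private lemma log_one_sub_tendsto : Tendsto (fun p : ℝ => Real.log (1 - p)) (𝓝[>] 0) (𝓝 0) := by
  have : ContinuousAt (fun p : ℝ => Real.log (1 - p)) 0 := by
    have h : (1 : ℝ) - 0 ≠ 0 := by norm_num
    exact (Real.continuousAt_log h).comp (by fun_prop)
  simpa using this.continuousWithinAt.tendsto

private lemma slope_tendsto : Tendsto (fun p : ℝ => Real.log (1 - p) / p) (𝓝[>] 0) (𝓝 (-1)) := by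
  have hd : HasDerivAt (fun p : ℝ => Real.log (1 - p)) (-1) 0 := by
    have h1 : HasDerivAt (fun p : ℝ => 1 - p) (-1) 0 := by
      exact (hasDerivAt_id 0).const_sub 1
    have := (Real.hasDerivAt_log (by norm_num : (1:ℝ) - 0 ≠ 0)).comp 0 h1
    exact this.congr_deriv (by norm_num)
  have := hasDerivAt_iff_tendsto_slope.mp hd
  have h2 : Tendsto (slope (fun p : ℝ => Real.log (1 - p)) 0) (𝓝[>] 0) (𝓝 (-1)) :=
    this.mono_left (nhdsWithin_mono _ fun x hx => ne_of_gt hx)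
  refine h2.congr' ?_
  filter_upwards [self_mem_nhdsWithin] with p hp
  simp [slope_def_field, div_eq_div_iff]

/-- With `H(p)` the binary entropy, the rate of conservative two-stage testing
with an optimized Bernoulli first stage, `H(p) / [p·(e·ln((1-p)/p) + 1)]`,
tends to `1/(e·ln 2)` as `p → 0⁺`. -/
theorem bernoulli_stage_rate :
    Filter.Tendsto
      (fun p : ℝ =>
        (-p * Real.logb 2 p - (1 - p) * Real.logb 2 (1 - p)) /
          (p * (Real.exp 1 * Real.log ((1 - p) / p) + 1)))
      (nhdsWithin 0 (Set.Ioi 0)) (nhds (1 / (Real.exp 1 * Real.log 2))) := by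
  set e := Real.exp 1 with he
  have he0 : e ≠ 0 := Real.exp_ne_zero 1
  have hl2 : Real.log 2 ≠ 0 := by
    exact ne_of_gt (Real.log_pos one_lt_two)
  -- auxiliary limits
  have hA : Tendsto (fun p : ℝ =>
      1 / Real.log 2 + (Real.log (1 - p) / p) * (Real.log p)⁻¹ * (1 - p) / Real.log 2)
      (𝓝[>] 0) (𝓝 (1 / Real.log 2)) := by
    have : Tendsto (fun p : ℝ => (Real.log (1 - p) / p) * (Real.log p)⁻¹ * (1 - p))
        (𝓝[>] 0) (𝓝 0) := by
      have h1 : Tendsto (fun p : ℝ => (1 : ℝ) - p) (𝓝[>] 0) (𝓝 1) := by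
        have : ContinuousAt (fun p : ℝ => (1:ℝ) - p) 0 := by fun_prop
        simpa using this.continuousWithinAt.tendsto
      have := (slope_tendsto.mul inv_log_tendsto).mul h1
      simpa using this
    have := this.div_const (Real.log 2)
    simpa using (tendsto_const_nhds.add this)
  have hB : Tendsto (fun p : ℝ =>
      e - e * (Real.log (1 - p) * (Real.log p)⁻¹) - (Real.log p)⁻¹)
      (𝓝[>] 0) (𝓝 e) := by
    have h1 := (log_one_sub_tendsto.mul inv_log_tendsto).const_mul e
    have h2 : Tendsto (fun _ : ℝ => e) (𝓝[>] 0) (𝓝 e) := tendsto_const_nhds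
    have := (h2.sub h1).sub inv_log_tendsto
    simpa using this
  have hdiv := hA.div hB he0
  have hval : 1 / Real.log 2 / e = 1 / (e * Real.log 2) := by
    field_simp
  rw [hval] at hdiv
  refine hdiv.congr' ?_
  filter_upwards [Ioo_mem_nhdsGT_of_mem (by norm_num : (0:ℝ) ∈ Ico 0 (1/2))]
    with p hp
  obtain ⟨hp0, hp2⟩ := hp
  have hp1 : (1 : ℝ) - p > 0 := by linarith
  have hlp : Real.log p ≠ 0 := by
    have : Real.log p < 0 := Real.log_neg hp0 (by linarith)
    linarith
  have hpne : p ≠ 0 := ne_of_gt hp0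
  have hLneg : Real.log p < 0 := Real.log_neg hp0 (by linarith)
  have hc : (-(p * Real.log p))⁻¹ ≠ 0 := by
    have : p * Real.log p < 0 := mul_neg_of_pos_of_neg hp0 hLneg
    simp only [ne_eq, inv_eq_zero]
    linarith
  simp only [Pi.div_apply]
  rw [Real.log_div (ne_of_gt hp1) hpne, Real.logb, Real.logb]
  have e1 : 1 / Real.log 2 +
      Real.log (1 - p) / p * (Real.log p)⁻¹ * (1 - p) / Real.log 2 =
      (-p * (Real.log p / Real.log 2) - (1 - p) * (Real.log (1 - p) / Real.log 2)) *
        (-(p * Real.log p))⁻¹ := by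
    field_simp
    ring
  have e2 : e - e * (Real.log (1 - p) * (Real.log p)⁻¹) - (Real.log p)⁻¹ =
      (p * (e * (Real.log (1 - p) - Real.log p) + 1)) * (-(p * Real.log p))⁻¹ := by
    field_simp
    ring
  rw [e1, e2, mul_div_mul_right _ _ hc]
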